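/- For every polynomial p ∈ ℂ[X], the norm in C of the element (the restriction of the polynomial function p to 𝕋, c₀·I₂ + c₁·N) equals sup_{z ∈ 𝕋} |p(z)|, where c₀ and c₁ are the coefficients of degree 0 and 1 of p and I₂ is the 2×2 identity matrix. (Note that c₀·I₂ + c₁·N = p(N) since N² = 0; the inequality ‖p(N)‖ ≤ sup_{z ∈ 𝕋} |p(z)| is the instance of von Neumann's inequality by which the paper shows that the embedding ι of the disc algebra into C is isometric.) -/

import Mathlib

open scoped Matrix.Norms.L2Operator

noncomputable section

/-- The unit circle in `ℂ`. -/
abbrev 𝕋 : Set ℂ := Metric.sphere (0 : ℂ) 1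

/-- The C*-cover `C = C(𝕋, ℂ) × M₂(ℂ)`, where `M₂(ℂ)` carries the operator norm
induced by the Euclidean norm on `ℂ²` and the product carries the max norm. -/
abbrev CstarCover : Type := C(𝕋, ℂ) × Matrix (Fin 2) (Fin 2) ℂ

/-- The nilpotent matrix `N` with `N₂₁ = 1` and all other entries `0`. -/
def N : Matrix (Fin 2) (Fin 2) ℂ := !![0, 0; 1, 0]

/-- The restriction of a polynomial function to the unit circle, in `C(𝕋, ℂ)`. -/
def polyT (p : Polynomial ℂ) : C(𝕋, ℂ) :=
  ⟨fun z => p.eval (z : ℂ), p.continuous.comp continuous_subtype_val⟩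

open Finset Polynomial in
/-- Orthogonality of the `m`-th roots of unity. -/
lemma ortho_sum (m : ℕ) (hm : m ≠ 0) {k l : ℕ} (hk : k < m) (hl : l < m) :
    ∑ j ∈ Finset.range m, ((Complex.exp (2 * Real.pi * Complex.I / m) ^ j) ^ k *
      (starRingEnd ℂ) ((Complex.exp (2 * Real.pi * Complex.I / m) ^ j) ^ l)) =
      if k = l then (m : ℂ) else 0 := by
  set ω : ℂ := Complex.exp (2 * Real.pi * Complex.I / m) with hωdef
  have hω : IsPrimitiveRoot ω m := Complex.isPrimitiveRoot_exp m hm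
  have habs : ω * (starRingEnd ℂ) ω = 1 := by
    rw [Complex.mul_conj]
    norm_cast
    rw [← Complex.sq_norm, hωdef, Complex.norm_exp]
    have h1 : (2 * (Real.pi : ℂ) * Complex.I / (m : ℂ)) =
        ((2 * Real.pi / m : ℝ) : ℂ) * Complex.I := by push_cast; ring
    rw [h1]
    simp
  have hu : ∀ n : ℕ, ω ^ n * (starRingEnd ℂ) (ω ^ n) = 1 := fun n => by
    rw [map_pow, ← mul_pow, habs, one_pow]
  have hterm : ∀ j, (ω ^ j) ^ k * (starRingEnd ℂ) ((ω ^ j) ^ l)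
      = (ω ^ k * (starRingEnd ℂ) (ω ^ l)) ^ j := by
    intro j
    simp only [map_pow, mul_pow, ← pow_mul]
    rw [Nat.mul_comm j k, Nat.mul_comm j l]
  simp only [hterm]
  by_cases hkl : k = l
  · subst hkl
    rw [if_pos rfl]
    have h1 : ω ^ k * (starRingEnd ℂ) ω ^ k = 1 := by rw [← map_pow]; exact hu k
    simp [h1, Finset.card_range]
  · have hζ1 : ω ^ k * (starRingEnd ℂ) (ω ^ l) ≠ 1 := by
      intro h
      apply hkl
      refine hω.pow_inj hk hl ?_
      have h2 : (starRingEnd ℂ) (ω ^ l) * ω ^ l = 1 := by rw [mul_comm]; exact hu l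
      calc ω ^ k = ω ^ k * ((starRingEnd ℂ) (ω ^ l) * ω ^ l) := by rw [h2, mul_one]
        _ = (ω ^ k * (starRingEnd ℂ) (ω ^ l)) * ω ^ l := by ring
        _ = ω ^ l := by rw [h, one_mul]
    have hζm : (ω ^ k * (starRingEnd ℂ) (ω ^ l)) ^ m = 1 := by
      rw [mul_pow, ← pow_mul, Nat.mul_comm k m, pow_mul, hω.pow_eq_one, one_pow, one_mul,
        ← map_pow, ← pow_mul, Nat.mul_comm l m, pow_mul, hω.pow_eq_one, one_pow, map_one]
    rw [geom_sum_eq hζ1, hζm, sub_self, zero_div, if_neg hkl]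

open Finset Polynomial in
/-- Discrete Parseval identity at `m`-th roots of unity. -/
lemma parseval (m : ℕ) (hm : m ≠ 0) (f : Polynomial ℂ) (hf : f.natDegree < m) :
    ∑ j ∈ Finset.range m,
        ‖f.eval (Complex.exp (2 * Real.pi * Complex.I / m) ^ j)‖ ^ 2
      = m * ∑ k ∈ Finset.range m, ‖f.coeff k‖ ^ 2 := by
  set ω : ℂ := Complex.exp (2 * Real.pi * Complex.I / m) with hωdef
  have key : ∑ j ∈ range m, (f.eval (ω ^ j) * (starRingEnd ℂ) (f.eval (ω ^ j)))
      = (m : ℂ) * ∑ k ∈ range m, (f.coeff k * (starRingEnd ℂ) (f.coeff k)) := by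
    have heval : ∀ x : ℂ, f.eval x = ∑ k ∈ range m, f.coeff k * x ^ k := fun x =>
      Polynomial.eval_eq_sum_range' hf x
    calc ∑ j ∈ range m, (f.eval (ω ^ j) * (starRingEnd ℂ) (f.eval (ω ^ j)))
        = ∑ j ∈ range m, ∑ k ∈ range m, ∑ l ∈ range m,
            (f.coeff k * (starRingEnd ℂ) (f.coeff l)) *
              ((ω ^ j) ^ k * (starRingEnd ℂ) ((ω ^ j) ^ l)) := by
          refine Finset.sum_congr rfl fun j _ => ?_
          rw [heval, map_sum, Finset.sum_mul_sum]
          refine Finset.sum_congr rfl fun k _ => Finset.sum_congr rfl fun l _ => ?_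
          rw [map_mul, map_pow]
          ring
      _ = ∑ k ∈ range m, ∑ l ∈ range m,
            (f.coeff k * (starRingEnd ℂ) (f.coeff l)) *
              ∑ j ∈ range m, ((ω ^ j) ^ k * (starRingEnd ℂ) ((ω ^ j) ^ l)) := by
          rw [Finset.sum_comm]
          refine Finset.sum_congr rfl fun k _ => ?_
          rw [Finset.sum_comm]
          refine Finset.sum_congr rfl fun l _ => ?_
          rw [Finset.mul_sum]
      _ = ∑ k ∈ range m, (f.coeff k * (starRingEnd ℂ) (f.coeff k)) * m := by
          refine Finset.sum_congr rfl fun k hk => ?_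
          rw [Finset.sum_eq_single k]
          · rw [ortho_sum m hm (Finset.mem_range.1 hk) (Finset.mem_range.1 hk), if_pos rfl]
          · intro l hl hlk
            rw [ortho_sum m hm (Finset.mem_range.1 hk) (Finset.mem_range.1 hl),
              if_neg (fun h => hlk h.symm), mul_zero]
          · intro h; exact absurd hk h
      _ = (m : ℂ) * ∑ k ∈ range m, (f.coeff k * (starRingEnd ℂ) (f.coeff k)) := by
          rw [Finset.mul_sum]
          exact Finset.sum_congr rfl fun k _ => mul_comm _ _
  simp only [Complex.mul_conj] at key
  have goal' : ((∑ j ∈ range m, Complex.normSq (f.eval (ω ^ j)) : ℝ) : ℂ)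
      = (((m : ℝ) * ∑ k ∈ range m, Complex.normSq (f.coeff k) : ℝ) : ℂ) := by
    push_cast
    exact key
  have := Complex.ofReal_injective goal'
  simpa only [Complex.sq_norm] using this

lemma abs_omega_pow (m : ℕ) (j : ℕ) :
    ‖Complex.exp (2 * Real.pi * Complex.I / m) ^ j‖ = 1 := by
  rw [norm_pow]
  have h1 : (2 * (Real.pi : ℂ) * Complex.I / (m : ℂ)) =
      ((2 * Real.pi / m : ℝ) : ℂ) * Complex.I := by push_cast; ring
  rw [h1, Complex.norm_exp]
  simp

open Polynomial Matrix in
/-- von Neumann's inequality for the nilpotent contraction `N`. -/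
lemma matrix_bound (p : Polynomial ℂ) (M : ℝ) (hM0 : 0 ≤ M)
    (hM : ∀ z : ℂ, ‖z‖ = 1 → ‖p.eval z‖ ≤ M) :
    ‖p.coeff 0 • (1 : Matrix (Fin 2) (Fin 2) ℂ) + p.coeff 1 • N‖ ≤ M := by
  set A : Matrix (Fin 2) (Fin 2) ℂ := p.coeff 0 • 1 + p.coeff 1 • N with hA
  rw [Matrix.l2_opNorm_def]
  refine ContinuousLinearMap.opNorm_le_bound _ hM0 fun x => ?_
  set c0 : ℂ := p.coeff 0
  set c1 : ℂ := p.coeff 1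
  set x0 : ℂ := x 0
  set x1 : ℂ := x 1
  -- the components of `A *ᵥ x`
  have hc0 : (A *ᵥ (x : Fin 2 → ℂ)) 0 = c0 * x0 := by
    simp [hA, Matrix.mulVec, dotProduct, Fin.sum_univ_two, N, Matrix.one_apply,
      Matrix.add_apply, Matrix.smul_apply, x0, x1, smul_eq_mul]
  have hc1 : (A *ᵥ (x : Fin 2 → ℂ)) 1 = c1 * x0 + c0 * x1 := by
    simp [hA, Matrix.mulVec, dotProduct, Fin.sum_univ_two, N, Matrix.one_apply,
      Matrix.add_apply, Matrix.smul_apply, x0, x1, smul_eq_mul]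
  -- the auxiliary polynomials
  set q : Polynomial ℂ := C x0 + C x1 * X with hq
  set f : Polynomial ℂ := p * q with hf
  set m : ℕ := f.natDegree + 2 with hmdef
  have hm : m ≠ 0 := by omega
  have hfm : f.natDegree < m := by omega
  have hqdeg : q.natDegree ≤ 1 := by
    refine le_trans (natDegree_add_le _ _) ?_
    simp only [natDegree_C, max_le_iff]
    exact ⟨Nat.zero_le 1, le_trans (natDegree_mul_le) (by simp)⟩
  have hqm : q.natDegree < m := lt_of_le_of_lt hqdeg (by omega)
  have hq0 : q.coeff 0 = x0 := by simp [hq]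
  have hq1 : q.coeff 1 = x1 := by simp [hq, coeff_C]
  have hd0 : f.coeff 0 = c0 * x0 := by rw [hf, Polynomial.mul_coeff_zero, hq0]
  have hd1 : f.coeff 1 = c0 * x1 + c1 * x0 := by
    rw [hf, Polynomial.coeff_mul, Finset.Nat.sum_antidiagonal_eq_sum_range_succ_mk]
    simp [Finset.sum_range_succ, hq0, hq1, c0, c1]
  set ω : ℂ := Complex.exp (2 * Real.pi * Complex.I / m) with hω
  -- the key quadratic inequality
  have key : ‖c0 * x0‖ ^ 2 + ‖c1 * x0 + c0 * x1‖ ^ 2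
      ≤ M ^ 2 * (‖x0‖ ^ 2 + ‖x1‖ ^ 2) := by
    have S2 : ∑ k ∈ Finset.range 2, ‖f.coeff k‖ ^ 2
        ≤ ∑ k ∈ Finset.range m, ‖f.coeff k‖ ^ 2 := by
      refine Finset.sum_le_sum_of_subset_of_nonneg
        (Finset.range_subset_range.2 (by omega)) fun i _ _ => by positivity
    have P1 : (m : ℝ) * ∑ k ∈ Finset.range m, ‖f.coeff k‖ ^ 2
        = ∑ j ∈ Finset.range m, ‖f.eval (ω ^ j)‖ ^ 2 :=
      (parseval m hm f hfm).symm
    have B : ∑ j ∈ Finset.range m, ‖f.eval (ω ^ j)‖ ^ 2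
        ≤ M ^ 2 * ∑ j ∈ Finset.range m, ‖q.eval (ω ^ j)‖ ^ 2 := by
      rw [Finset.mul_sum]
      refine Finset.sum_le_sum fun j _ => ?_
      rw [hf, eval_mul, norm_mul, mul_pow]
      refine mul_le_mul_of_nonneg_right ?_ (by positivity)
      have := hM (ω ^ j) (abs_omega_pow m j)
      exact pow_le_pow_left₀ (norm_nonneg _) this 2
    have P2 : ∑ j ∈ Finset.range m, ‖q.eval (ω ^ j)‖ ^ 2
        = (m : ℝ) * (‖x0‖ ^ 2 + ‖x1‖ ^ 2) := by
      rw [parseval m hm q hqm]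
      congr 1
      rw [← Finset.sum_subset (Finset.range_subset_range.2 (show 2 ≤ m by omega))
        (fun k _ hk => ?_)]
      · simp [Finset.sum_range_succ, hq0, hq1]
      · have h2 : 2 ≤ k := Nat.le_of_not_lt (fun h => hk (Finset.mem_range.2 h))
        rw [Polynomial.coeff_eq_zero_of_natDegree_lt (lt_of_le_of_lt hqdeg (by omega))]
        simp
    have chain : (m : ℝ) * ∑ k ∈ Finset.range 2, ‖f.coeff k‖ ^ 2
        ≤ (m : ℝ) * (M ^ 2 * (‖x0‖ ^ 2 + ‖x1‖ ^ 2)) := by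
      calc (m : ℝ) * ∑ k ∈ Finset.range 2, ‖f.coeff k‖ ^ 2
          ≤ (m : ℝ) * ∑ k ∈ Finset.range m, ‖f.coeff k‖ ^ 2 :=
            mul_le_mul_of_nonneg_left S2 (by positivity)
        _ = ∑ j ∈ Finset.range m, ‖f.eval (ω ^ j)‖ ^ 2 := P1
        _ ≤ M ^ 2 * ∑ j ∈ Finset.range m, ‖q.eval (ω ^ j)‖ ^ 2 := B
        _ = (m : ℝ) * (M ^ 2 * (‖x0‖ ^ 2 + ‖x1‖ ^ 2)) := by
            rw [P2]; ring
    have hmpos : (0 : ℝ) < m := by positivity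
    have := le_of_mul_le_mul_left chain hmpos
    simp only [Finset.sum_range_succ, Finset.sum_range_zero, zero_add, hd0, hd1] at this
    rwa [add_comm (c0 * x1) (c1 * x0)] at this
  -- convert to norms
  have hval : ((Matrix.toEuclideanLin.trans LinearMap.toContinuousLinearMap) A) x
      = (WithLp.equiv 2 (Fin 2 → ℂ)).symm (A *ᵥ (x : Fin 2 → ℂ)) := rfl
  rw [hval, EuclideanSpace.norm_eq, EuclideanSpace.norm_eq]
  simp only [Fin.sum_univ_two, WithLp.equiv_symm_apply, WithLp.ofLp_toLp, hc0, hc1]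
  calc Real.sqrt (‖c0 * x0‖ ^ 2 + ‖c1 * x0 + c0 * x1‖ ^ 2)
      ≤ Real.sqrt (M ^ 2 * (‖x0‖ ^ 2 + ‖x1‖ ^ 2)) :=
        Real.sqrt_le_sqrt key
    _ = M * Real.sqrt (‖x0‖ ^ 2 + ‖x1‖ ^ 2) := by
        rw [Real.sqrt_mul (by positivity), Real.sqrt_sq hM0]

/-- von Neumann's inequality instance used in the paper: for any polynomial `p`, the norm of
`(p|_𝕋, p(N)) = (p|_𝕋, c₀·I + c₁·N)` in `C(𝕋, ℂ) × M₂(ℂ)` equals `sup_{z ∈ 𝕋} |p(z)|`. -/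
theorem norm_iota_poly (p : Polynomial ℂ) :
    ‖((polyT p, p.coeff 0 • (1 : Matrix (Fin 2) (Fin 2) ℂ) + p.coeff 1 • N) : CstarCover)‖
      = ⨆ z : 𝕋, ‖p.eval (z : ℂ)‖ := by
  have hsup : ‖polyT p‖ = ⨆ z : 𝕋, ‖p.eval (z : ℂ)‖ := by
    rw [ContinuousMap.norm_eq_iSup_norm]
    exact iSup_congr fun z => by simp [polyT]
  have hb : ‖p.coeff 0 • (1 : Matrix (Fin 2) (Fin 2) ℂ) + p.coeff 1 • N‖ ≤ ‖polyT p‖ := by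
    refine matrix_bound p _ (norm_nonneg _) fun z hz => ?_
    have hz' : z ∈ 𝕋 := by
      simpa [mem_sphere_zero_iff_norm] using hz
    simpa [polyT] using (polyT p).norm_coe_le_norm ⟨z, hz'⟩
  rw [Prod.norm_def]
  simp only []
  rw [max_eq_left hb, hsup]
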